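/- Let A be a Banach algebra with unit, H : ℝ → A continuous, t ≥ 0, n_1, …, n_k ≥ 1 with n = n_1 + ⋯ + n_k, and S_j ⊆ {1,…,n_j−1} for 1 ≤ j ≤ k. Then H_{D_{S_1}^{(n_1)}}(t) · H_{D_{S_2}^{(n_2)}}(t) ⋯ H_{D_{S_k}^{(n_k)}}(t) = H_{D_T^{(n)}}(t), where T := S_1 ∪ {n_1} ∪ (S_2+n_1) ∪ {n_1+n_2} ∪ ⋯ ∪ {n_1+⋯+n_{k−1}} ∪ (S_k + n_1+⋯+n_{k−1}) and S + m := {s + m : s ∈ S}. -/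

import Mathlib

open MeasureTheory

open Classical in
/-- The descent set of a permutation `σ ∈ S_n` (1-based convention):
`Desc(σ) = {i ∈ {1,…,n−1} : σ(i) > σ(i+1)}`. -/
noncomputable def descSet {n : ℕ} (σ : Equiv.Perm (Fin n)) : Finset ℕ :=
  (Finset.Ioo 0 n).filter
    (fun i => ∃ h : i < n, σ ⟨i, h⟩ < σ ⟨i - 1, lt_of_le_of_lt (Nat.sub_le i 1) h⟩)

/-- The simplex `Δ_t^n = {0 ≤ t₁ ≤ ⋯ ≤ tₙ ≤ t}` inside `Fin n → ℝ`. -/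
def simplex (n : ℕ) (t : ℝ) : Set (Fin n → ℝ) :=
  {u | (∀ i, 0 ≤ u i ∧ u i ≤ t) ∧ ∀ i j, i ≤ j → u i ≤ u j}

variable {A : Type*} [NormedRing A] [NormedAlgebra ℝ A] [CompleteSpace A]

/-- The iterated integral `H_σ(t) = ∫_{Δ_t^n} H(t_{σ(1)})⋯H(t_{σ(n)}) dt₁⋯dtₙ`. -/
noncomputable def Hperm (H : ℝ → A) {n : ℕ} (σ : Equiv.Perm (Fin n)) (t : ℝ) : A :=
  ∫ u in simplex n t, (List.ofFn (fun j => H (u (σ j)))).prod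

/-- `H_n(t) = ∫_{Δ_t^n} H(t₁)⋯H(tₙ) dt₁⋯dtₙ`, with `H_0(t) = 1`. -/
noncomputable def Hn (H : ℝ → A) : ℕ → ℝ → A
  | 0, _ => 1
  | (n + 1), t => Hperm H (1 : Equiv.Perm (Fin (n + 1))) t

/-- The iterated integral evaluated on the Dynkin element:
`H_{𝒟_m}(t) = Σ_{j=0}^{m-1} (-1)^j H_{D_{={1,…,j}}^{(m)}}(t)`. -/
noncomputable def HDyn (H : ℝ → A) (m : ℕ) (t : ℝ) : A :=
  ∑ j ∈ Finset.range m, (-1 : ℝ) ^ j •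
    ∑ σ ∈ Finset.univ.filter
        (fun σ : Equiv.Perm (Fin m) => descSet σ = Finset.Icc 1 j),
      Hperm H σ t


set_option linter.unusedSectionVars false
set_option linter.unusedVariables false
set_option linter.deprecated false
set_option linter.unreachableTactic false
set_option linter.unusedTactic false
set_option maxHeartbeats 1000000


def ordsS {n : ℕ} (σ : Equiv.Perm (Fin n)) (t : ℝ) : Set (Fin n → ℝ) :=
  {v | (∀ i, 0 ≤ v i ∧ v i ≤ t) ∧ ∀ i j, i < j → v (σ⁻¹ i) < v (σ⁻¹ j)}

def ords {n : ℕ} (σ : Equiv.Perm (Fin n)) (t : ℝ) : Set (Fin n → ℝ) :=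
  {v | (∀ i, 0 ≤ v i ∧ v i ≤ t) ∧ ∀ i j, i ≤ j → v (σ⁻¹ i) ≤ v (σ⁻¹ j)}

def reg (n : ℕ) (S : Finset ℕ) (t : ℝ) : Set (Fin n → ℝ) :=
  {v | (∀ i, 0 ≤ v i ∧ v i ≤ t) ∧
    ∀ i : ℕ, ∀ hi : i + 1 < n, (i + 1) ∉ S →
      v ⟨i, Nat.lt_of_succ_lt hi⟩ ≤ v ⟨i + 1, hi⟩}

def bad (n : ℕ) : Set (Fin n → ℝ) :=
  ⋃ p : Fin n × Fin n, {v : Fin n → ℝ | p.1 ≠ p.2 ∧ v p.1 = v p.2}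

lemma null_hyperplane (n : ℕ) (a b : Fin n) (hab : a ≠ b) :
    volume {v : Fin n → ℝ | v a = v b} = 0 := by
  have h : {v : Fin n → ℝ | v a = v b}
      = ↑(LinearMap.ker ((LinearMap.proj a : (Fin n → ℝ) →ₗ[ℝ] ℝ) - LinearMap.proj b)) := by
    ext v
    simp [LinearMap.mem_ker, sub_eq_zero, LinearMap.proj]
  rw [h]
  refine Measure.addHaar_submodule _ _ ?_
  intro hker
  have : (((LinearMap.proj a : (Fin n → ℝ) →ₗ[ℝ] ℝ) - LinearMap.proj b) : (Fin n → ℝ) →ₗ[ℝ] ℝ)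
      (Pi.single a 1) = 0 := by
    rw [← LinearMap.mem_ker, hker]; trivial
  simp [LinearMap.sub_apply, LinearMap.proj_apply, Pi.single_eq_same,
    Pi.single_eq_of_ne hab.symm] at this

lemma null_bad (n : ℕ) : volume (bad n) = 0 := by
  refine measure_iUnion_null fun p => ?_
  by_cases h : p.1 = p.2
  · have : {v : Fin n → ℝ | p.1 ≠ p.2 ∧ v p.1 = v p.2} = ∅ := by
      ext v; simp [h]
    simp [this]
  · exact measure_mono_null (fun v hv => hv.2) (null_hyperplane n p.1 p.2 h)

lemma measurableSet_ordsS {n : ℕ} (σ : Equiv.Perm (Fin n)) (t : ℝ) :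
    MeasurableSet (ordsS σ t) := by
  have h : ordsS σ t =
      (⋂ i, ({v : Fin n → ℝ | 0 ≤ v i} ∩ {v | v i ≤ t})) ∩
      ⋂ (i) (j) (_ : i < j), {v : Fin n → ℝ | v (σ⁻¹ i) < v (σ⁻¹ j)} := by
    ext v
    simp only [ordsS, Set.mem_setOf_eq, Set.mem_inter_iff, Set.mem_iInter]
  rw [h]
  refine MeasurableSet.inter ?_ ?_
  · exact MeasurableSet.iInter fun i =>
      ((measurableSet_le measurable_const (measurable_pi_apply i)).inter
        (measurableSet_le (measurable_pi_apply i) measurable_const))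
  · exact MeasurableSet.iInter fun i => MeasurableSet.iInter fun j =>
      MeasurableSet.iInter fun _ =>
        measurableSet_lt (measurable_pi_apply _) (measurable_pi_apply _)

lemma measurableSet_reg (n : ℕ) (S : Finset ℕ) (t : ℝ) :
    MeasurableSet (reg n S t) := by
  have h : reg n S t =
      (⋂ i, ({v : Fin n → ℝ | 0 ≤ v i} ∩ {v | v i ≤ t})) ∩
      ⋂ (i : ℕ) (hi : i + 1 < n) (_ : (i + 1) ∉ S),
        {v : Fin n → ℝ | v ⟨i, Nat.lt_of_succ_lt hi⟩ ≤ v ⟨i + 1, hi⟩} := by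
    ext v
    simp only [reg, Set.mem_setOf_eq, Set.mem_inter_iff, Set.mem_iInter]
  rw [h]
  refine MeasurableSet.inter ?_ ?_
  · exact MeasurableSet.iInter fun i =>
      ((measurableSet_le measurable_const (measurable_pi_apply i)).inter
        (measurableSet_le (measurable_pi_apply i) measurable_const))
  · exact MeasurableSet.iInter fun i => MeasurableSet.iInter fun hi =>
      MeasurableSet.iInter fun _ =>
        measurableSet_le (measurable_pi_apply _) (measurable_pi_apply _)

lemma ords_diff_null {n : ℕ} (σ : Equiv.Perm (Fin n)) (t : ℝ) :
    volume (ords σ t \ ordsS σ t) = 0 := by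
  refine measure_mono_null ?_ (null_bad n)
  rintro v ⟨⟨hc, hm⟩, hns⟩
  simp only [ordsS, Set.mem_setOf_eq, not_and] at hns
  have := hns hc
  push_neg at this
  obtain ⟨i, j, hij, hge⟩ := this
  have heq : v (σ⁻¹ i) = v (σ⁻¹ j) := le_antisymm (hm i j hij.le) hge
  refine Set.mem_iUnion.2 ⟨(σ⁻¹ i, σ⁻¹ j), ?_, heq⟩
  exact fun h => hij.ne (σ⁻¹.injective h)

lemma ords_ae_ordsS {n : ℕ} (σ : Equiv.Perm (Fin n)) (t : ℝ) :
    ords σ t =ᵐ[volume] ordsS σ t := by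
  rw [MeasureTheory.ae_eq_set]
  constructor
  · exact ords_diff_null σ t
  · have h : ordsS σ t \ ords σ t = ∅ := by
      rw [Set.diff_eq_empty]
      rintro v ⟨h1, h2⟩
      exact ⟨h1, fun i j hij => by
        rcases lt_or_eq_of_le hij with h | h
        · exact (h2 i j h).le
        · rw [h]⟩
    simp [h]

lemma strictMono_perm_eq_one {n : ℕ} (π : Equiv.Perm (Fin n)) (h : StrictMono ⇑π) :
    π = 1 := by
  have h2 : StrictMono (fun i : Fin n => i) := strictMono_id
  have hr : Set.range ⇑π = Set.range (fun i : Fin n => i) := by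
    simp [π.surjective.range_eq]
  have := (h.range_inj h2).1 hr
  exact Equiv.ext fun i => congrFun this i

lemma disjoint_ordsS {n : ℕ} {σ τ : Equiv.Perm (Fin n)} (hστ : σ ≠ τ) (t : ℝ) :
    Disjoint (ordsS σ t) (ordsS τ t) := by
  rw [Set.disjoint_left]
  rintro v ⟨hc, hσ⟩ ⟨_, hτ⟩
  have hf : StrictMono (fun i => v (σ⁻¹ i)) := fun i j hij => hσ i j hij
  have hg : StrictMono (fun i => v (τ⁻¹ i)) := fun i j hij => hτ i j hij
  set ρ : Equiv.Perm (Fin n) := (τ⁻¹ : Equiv.Perm (Fin n)).trans σ with hρ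
  have hcomp : ∀ i, v (σ⁻¹ (ρ i)) = v (τ⁻¹ i) := by
    intro i
    simp [hρ, Equiv.trans_apply, Equiv.Perm.coe_inv, Equiv.symm_apply_apply]
  have hρmono : StrictMono ⇑ρ := by
    intro i j hij
    have h3 : v (τ⁻¹ i) < v (τ⁻¹ j) := hg hij
    rw [← hcomp i, ← hcomp j] at h3
    exact hf.lt_iff_lt.1 h3
  have hone := strictMono_perm_eq_one ρ hρmono
  have hid : ∀ i, σ (τ⁻¹ i) = i := by
    intro i
    have : ρ i = i := by rw [hone]; rfl
    exact this
  apply hστ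
  refine Equiv.ext fun i => ?_
  have := hid (τ i)
  rwa [Equiv.Perm.coe_inv, Equiv.symm_apply_apply] at this


def cube (n : ℕ) (t : ℝ) : Set (Fin n → ℝ) := {v | ∀ i, 0 ≤ v i ∧ v i ≤ t}

lemma isCompact_cube (n : ℕ) (t : ℝ) : IsCompact (cube n t) := by
  have : cube n t = Set.Icc (0 : Fin n → ℝ) (fun _ => t) := by
    ext v; simp [cube, Set.mem_Icc, Pi.le_def, forall_and]
  rw [this]; exact isCompact_Icc


noncomputable def Fn (H : ℝ → A) (n : ℕ) : (Fin n → ℝ) → A :=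
  fun u => (List.ofFn fun j => H (u j)).prod

lemma continuous_Fn (H : ℝ → A) (hH : Continuous H) (n : ℕ) : Continuous (Fn H n) := by
  unfold Fn
  simp only [List.ofFn_eq_map]
  exact continuous_list_prod _ (fun i _ => hH.comp (continuous_apply i))

lemma integrableOn_Fn (H : ℝ → A) (hH : Continuous H) (n : ℕ) (t : ℝ)
    {s : Set (Fin n → ℝ)} (hsub : s ⊆ cube n t) :
    IntegrableOn (Fn H n) s := by
  refine IntegrableOn.mono_set ?_ hsub
  exact ((continuous_Fn H hH n).continuousOn).integrableOn_compact (isCompact_cube n t)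


lemma Hperm_eq_ords (H : ℝ → A) {n : ℕ} (σ : Equiv.Perm (Fin n)) (t : ℝ) :
    Hperm H σ t = ∫ v in ords σ t, Fn H n v := by
  have hφpres : MeasurePreserving
      (MeasurableEquiv.arrowCongr' (σ.symm : Fin n ≃ Fin n) (MeasurableEquiv.refl ℝ))
      (volume : Measure (Fin n → ℝ)) volume := by
    exact volume_preserving_arrowCongr' _ _ (MeasurePreserving.id _)
  set φ := MeasurableEquiv.arrowCongr' (σ.symm : Fin n ≃ Fin n) (MeasurableEquiv.refl ℝ) with hφ
  have hφ_apply : ∀ (u : Fin n → ℝ) (i : Fin n), φ u i = u (σ i) := by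
    intro u i
    rfl
  have hpre : φ ⁻¹' (ords σ t) = simplex n t := by
    ext u
    simp only [Set.mem_preimage, ords, simplex, Set.mem_setOf_eq, hφ_apply]
    constructor
    · rintro ⟨h1, h2⟩
      refine ⟨fun i => ?_, fun i j hij => ?_⟩
      · have := h1 (σ.symm i); rwa [Equiv.apply_symm_apply] at this
      · have := h2 i j hij
        simpa [Equiv.Perm.coe_inv, Equiv.apply_symm_apply] using this
    · rintro ⟨h1, h2⟩
      refine ⟨fun i => h1 (σ i), fun i j hij => ?_⟩
      simpa [Equiv.Perm.coe_inv, Equiv.apply_symm_apply] using h2 i j hij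
  have := hφpres.setIntegral_preimage_emb φ.measurableEmbedding (Fn H n) (ords σ t)
  rw [hpre] at this
  rw [← this]
  rfl

lemma ordsS_subset_reg {n : ℕ} {σ : Equiv.Perm (Fin n)} {S : Finset ℕ} {t : ℝ}
    (hσ : descSet σ ⊆ S) : ordsS σ t ⊆ reg n S t := by
  rintro v ⟨hc, hs⟩
  refine ⟨hc, fun i hi hiS => ?_⟩
  have hne : σ ⟨i, Nat.lt_of_succ_lt hi⟩ ≠ σ ⟨i + 1, hi⟩ := by
    intro h
    have := σ.injective h
    simp [Fin.ext_iff] at this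
  have hlt : σ ⟨i, Nat.lt_of_succ_lt hi⟩ < σ ⟨i + 1, hi⟩ := by
    rcases lt_or_gt_of_ne hne with h | h
    · exact h
    · exfalso
      apply hiS
      apply hσ
      simp only [descSet, Finset.mem_filter, Finset.mem_Ioo]
      refine ⟨⟨Nat.succ_pos i, hi⟩, hi, ?_⟩
      have hmk : (⟨i + 1 - 1, lt_of_le_of_lt (Nat.sub_le (i+1) 1) hi⟩ : Fin n)
          = ⟨i, Nat.lt_of_succ_lt hi⟩ := by
        apply Fin.ext; simp
      rw [hmk]
      exact h
  have := hs _ _ hlt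
  exact le_of_lt (by simpa [Equiv.Perm.coe_inv, Equiv.symm_apply_apply] using this)

lemma reg_diff_subset_bad {n : ℕ} {S : Finset ℕ} {t : ℝ} :
    reg n S t \ (⋃ σ ∈ Finset.univ.filter
      (fun σ : Equiv.Perm (Fin n) => descSet σ ⊆ S), ordsS σ t) ⊆ bad n := by
  rintro v ⟨hreg, hnot⟩
  by_contra hvb
  have hinj : Function.Injective v := by
    intro a b hab
    by_contra hne
    exact hvb (Set.mem_iUnion.2 ⟨(a, b), hne, hab⟩)
  set σ : Equiv.Perm (Fin n) := (Tuple.sort v)⁻¹ with hσdef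
  have hsm : StrictMono (v ∘ Tuple.sort v) :=
    (Tuple.monotone_sort v).strictMono_of_injective (hinj.comp (Equiv.injective _))
  have hinvσ : ∀ i, σ⁻¹ i = Tuple.sort v i := by intro i; simp [hσdef]
  have hkey : ∀ y : Fin n, v y = (v ∘ Tuple.sort v) (σ y) := by
    intro y
    simp [hσdef, Function.comp]
  have hvmem : v ∈ ordsS σ t :=
    ⟨hreg.1, fun i j hij => by rw [hinvσ, hinvσ]; exact hsm hij⟩
  have hdesc : descSet σ ⊆ S := by
    intro x hx
    simp only [descSet, Finset.mem_filter, Finset.mem_Ioo] at hx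
    obtain ⟨⟨hx0, hxn⟩, hxn', hlt⟩ := hx
    by_contra hxS
    have hi : (x - 1) + 1 < n := by omega
    have hiS : (x - 1) + 1 ∉ S := by
      have hxx : x - 1 + 1 = x := by omega
      rwa [hxx]
    have hle := hreg.2 (x - 1) hi hiS
    have hmk : (⟨x - 1 + 1, hi⟩ : Fin n) = ⟨x, hxn'⟩ := by
      apply Fin.ext; simp; omega
    rw [hmk] at hle
    have hltv : v ⟨x, hxn'⟩ < v ⟨x - 1, lt_of_le_of_lt (Nat.sub_le x 1) hxn'⟩ := by
      rw [hkey ⟨x, hxn'⟩, hkey ⟨x - 1, lt_of_le_of_lt (Nat.sub_le x 1) hxn'⟩]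
      exact hsm hlt
    have hmk2 : (⟨x - 1, Nat.lt_of_succ_lt hi⟩ : Fin n)
        = ⟨x - 1, lt_of_le_of_lt (Nat.sub_le x 1) hxn'⟩ := rfl
    rw [hmk2] at hle
    exact absurd hle (not_le.2 hltv)
  exact hnot (Set.mem_iUnion.2 ⟨σ, Set.mem_iUnion.2
    ⟨Finset.mem_filter.2 ⟨Finset.mem_univ σ, hdesc⟩, hvmem⟩⟩)

lemma sum_Hperm (H : ℝ → A) (hH : Continuous H) (n : ℕ) (S : Finset ℕ) (t : ℝ) :
    ∑ σ ∈ Finset.univ.filter (fun σ : Equiv.Perm (Fin n) => descSet σ ⊆ S), Hperm H σ t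
      = ∫ v in reg n S t, Fn H n v := by
  have hsub : ∀ σ : Equiv.Perm (Fin n), ordsS σ t ⊆ cube n t := fun σ v hv => hv.1
  calc ∑ σ ∈ Finset.univ.filter (fun σ : Equiv.Perm (Fin n) => descSet σ ⊆ S), Hperm H σ t
      = ∑ σ ∈ Finset.univ.filter (fun σ : Equiv.Perm (Fin n) => descSet σ ⊆ S),
        ∫ v in ordsS σ t, Fn H n v := by
        refine Finset.sum_congr rfl fun σ _ => ?_
        rw [Hperm_eq_ords, setIntegral_congr_set (ords_ae_ordsS σ t)]
    _ = ∫ v in ⋃ σ ∈ Finset.univ.filter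
          (fun σ : Equiv.Perm (Fin n) => descSet σ ⊆ S), ordsS σ t, Fn H n v := by
        refine (integral_biUnion_finset _ (fun σ _ => measurableSet_ordsS σ t) ?_
          (fun σ _ => integrableOn_Fn H hH n t (hsub σ))).symm
        intro σ _ τ _ hστ
        exact disjoint_ordsS hστ t
    _ = ∫ v in reg n S t, Fn H n v := by
        refine setIntegral_congr_set ?_
        rw [MeasureTheory.ae_eq_set]
        constructor
        · rw [Set.diff_eq_empty.2 (Set.iUnion₂_subset fun σ hσ =>
            ordsS_subset_reg (Finset.mem_filter.1 hσ).2)]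
          exact measure_empty
        · exact measure_mono_null reg_diff_subset_bad (null_bad n)

noncomputable def II (H : ℝ → A) (n : ℕ) (S : Finset ℕ) (t : ℝ) : A :=
  ∫ v in reg n S t, Fn H n v

lemma sumHperm_II (H : ℝ → A) (hH : Continuous H) (n : ℕ) (S : Finset ℕ) (t : ℝ) :
    ∑ σ ∈ Finset.univ.filter (fun σ : Equiv.Perm (Fin n) => descSet σ ⊆ S), Hperm H σ t
      = II H n S t := sum_Hperm H hH n S t

/-- splitting equiv -/
noncomputable def splitE (m p : ℕ) : (Fin (m + p) → ℝ) ≃ᵐ (Fin m → ℝ) × (Fin p → ℝ) :=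
  (MeasurableEquiv.piCongrLeft (fun _ : Fin (m + p) => ℝ) finSumFinEquiv).symm.trans
    (MeasurableEquiv.sumPiEquivProdPi fun _ => ℝ)

lemma splitE_measurePreserving (m p : ℕ) :
    MeasurePreserving (splitE m p) (volume : Measure (Fin (m + p) → ℝ)) volume := by
  have h1 := (volume_measurePreserving_piCongrLeft (fun _ : Fin (m + p) => ℝ)
    finSumFinEquiv).symm (MeasurableEquiv.piCongrLeft (fun _ : Fin (m + p) => ℝ) finSumFinEquiv)
  have h2 := volume_measurePreserving_sumPiEquivProdPi (fun _ : Fin m ⊕ Fin p => ℝ)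
  exact h2.comp h1

lemma splitE_apply_fst (m p : ℕ) (v : Fin (m + p) → ℝ) (i : Fin m) :
    (splitE m p v).1 i = v (Fin.castAdd p i) := by
  simp [splitE, MeasurableEquiv.trans_apply, MeasurableEquiv.coe_sumPiEquivProdPi,
    MeasurableEquiv.piCongrLeft, Equiv.sumPiEquivProdPi, Equiv.piCongrLeft]

lemma splitE_apply_snd (m p : ℕ) (v : Fin (m + p) → ℝ) (j : Fin p) :
    (splitE m p v).2 j = v (Fin.natAdd m j) := by
  simp [splitE, MeasurableEquiv.trans_apply, MeasurableEquiv.coe_sumPiEquivProdPi,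
    MeasurableEquiv.piCongrLeft, Equiv.sumPiEquivProdPi, Equiv.piCongrLeft]

lemma Fn_split (H : ℝ → A) (m p : ℕ) (v : Fin (m + p) → ℝ) :
    Fn H (m + p) v = Fn H m ((splitE m p v).1) * Fn H p ((splitE m p v).2) := by
  unfold Fn
  rw [List.ofFn_add, List.prod_append]
  simp_rw [splitE_apply_fst, splitE_apply_snd]
  rfl

lemma reg_split (m p : ℕ) (S₁ S₂ : Finset ℕ) (t : ℝ) (hS₁ : ∀ x ∈ S₁, x ≤ m) :
    reg (m + p) (S₁ ∪ insert m (S₂.image (· + m))) t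
      = (splitE m p) ⁻¹' ((reg m S₁ t) ×ˢ (reg p S₂ t)) := by
  ext v
  simp only [Set.mem_preimage, Set.mem_prod]
  constructor
  · rintro ⟨hc, hcons⟩
    refine ⟨⟨fun i => ?_, fun i hi hiS => ?_⟩, ⟨fun j => ?_, fun j hj hjS => ?_⟩⟩
    · rw [splitE_apply_fst]; exact hc _
    · have hi' : i + 1 < m + p := by omega
      have hiT : (i + 1) ∉ S₁ ∪ insert m (S₂.image (· + m)) := by
        simp only [Finset.mem_union, Finset.mem_insert, Finset.mem_image]
        push_neg
        exact ⟨hiS, ⟨by omega, fun s hs => by omega⟩⟩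
      have := hcons i hi' hiT
      rw [splitE_apply_fst, splitE_apply_fst]
      convert this using 2 <;> apply Fin.ext <;> simp
    · rw [splitE_apply_snd]; exact hc _
    · have hi' : (m + j) + 1 < m + p := by omega
      have hiT : (m + j + 1) ∉ S₁ ∪ insert m (S₂.image (· + m)) := by
        simp only [Finset.mem_union, Finset.mem_insert, Finset.mem_image]
        push_neg
        refine ⟨fun hmem => by have := hS₁ _ hmem; omega, ⟨by omega, fun s hs heq => ?_⟩⟩
        have hsj : s = j + 1 := by omega
        exact hjS (hsj ▸ hs)
      have := hcons (m + j) hi' hiT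
      rw [splitE_apply_snd, splitE_apply_snd]
      convert this using 2 <;> apply Fin.ext <;> simp [Fin.natAdd] <;> omega
  · rintro ⟨⟨hc1, hcons1⟩, hc2, hcons2⟩
    constructor
    · intro i
      refine Fin.addCases (fun i0 => ?_) (fun j0 => ?_) i
      · have := hc1 i0; rwa [splitE_apply_fst] at this
      · have := hc2 j0; rwa [splitE_apply_snd] at this
    · intro i hi hiT
      simp only [Finset.mem_union, Finset.mem_insert, Finset.mem_image] at hiT
      push_neg at hiT
      obtain ⟨hi1, hi2, hi3⟩ := hiT
      by_cases him : i + 1 < m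
      · have := hcons1 i him hi1
        rw [splitE_apply_fst, splitE_apply_fst] at this
        convert this using 2 <;> apply Fin.ext <;> simp
      · have him' : m < i + 1 := by omega
        have hj : (i - m) + 1 < p := by omega
        have hjS : (i - m) + 1 ∉ S₂ := fun hmem => hi3 _ hmem (by omega)
        have := hcons2 (i - m) hj hjS
        rw [splitE_apply_snd, splitE_apply_snd] at this
        convert this using 2 <;> apply Fin.ext <;> simp [Fin.natAdd] <;> omega

lemma II_mul (H : ℝ → A) (hH : Continuous H) (m p : ℕ) (S₁ S₂ : Finset ℕ) (t : ℝ)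
    (hS₁ : ∀ x ∈ S₁, x ≤ m) :
    II H m S₁ t * II H p S₂ t
      = II H (m + p) (S₁ ∪ insert m (S₂.image (· + m))) t := by
  have hMP := splitE_measurePreserving m p
  have hEmb := (splitE m p).measurableEmbedding
  set s₁ := reg m S₁ t with hs₁
  set s₂ := reg p S₂ t with hs₂
  have hsplit : reg (m + p) (S₁ ∪ insert m (S₂.image (· + m))) t
      = (splitE m p) ⁻¹' (s₁ ×ˢ s₂) := reg_split m p S₁ S₂ t hS₁
  have hcomp : (fun z : (Fin m → ℝ) × (Fin p → ℝ) => Fn H m z.1 * Fn H p z.2) ∘ (splitE m p)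
      = Fn H (m + p) := by
    funext v
    rw [Function.comp_apply, ← Fn_split]
  have hint : IntegrableOn (fun z : (Fin m → ℝ) × (Fin p → ℝ) => Fn H m z.1 * Fn H p z.2)
      (s₁ ×ˢ s₂) volume := by
    rw [← hMP.integrableOn_comp_preimage hEmb, hcomp, ← hsplit]
    exact integrableOn_Fn H hH (m + p) t (fun v hv => hv.1)
  have h1 : II H (m + p) (S₁ ∪ insert m (S₂.image (· + m))) t
      = ∫ z in s₁ ×ˢ s₂, Fn H m z.1 * Fn H p z.2 := by
    rw [II, hsplit]
    have heq := hMP.setIntegral_preimage_emb hEmb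
      (fun z : (Fin m → ℝ) × (Fin p → ℝ) => Fn H m z.1 * Fn H p z.2) (s₁ ×ˢ s₂)
    rw [← heq]
    refine setIntegral_congr_fun ?_ ?_
    · rw [← hsplit]; exact measurableSet_reg _ _ _
    · intro v _
      exact Fn_split H m p v
  have hInt2 : Integrable (Fn H p) (volume.restrict s₂) :=
    integrableOn_Fn H hH p t (fun v hv => hv.1)
  have hInt1 : Integrable (Fn H m) (volume.restrict s₁) :=
    integrableOn_Fn H hH m t (fun v hv => hv.1)
  have h2 : (∫ z in s₁ ×ˢ s₂, Fn H m z.1 * Fn H p z.2)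
      = (∫ x in s₁, Fn H m x) * ∫ y in s₂, Fn H p y := by
    rw [Measure.volume_eq_prod _ _, setIntegral_prod _ ?hint2]
    case hint2 => rwa [← Measure.volume_eq_prod _ _]
    have hinner : ∀ x, (∫ y in s₂, Fn H m x * Fn H p y) = Fn H m x * ∫ y in s₂, Fn H p y := by
      intro x
      exact ContinuousLinearMap.integral_comp_comm (ContinuousLinearMap.mul ℝ A (Fn H m x)) hInt2
    simp_rw [hinner]
    exact ContinuousLinearMap.integral_comp_comm
      ((ContinuousLinearMap.mul ℝ A).flip (∫ y in s₂, Fn H p y)) hInt1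
  rw [h1, h2]
  rfl

def bigT : List (ℕ × Finset ℕ) → Finset ℕ
  | [] => ∅
  | q :: L => q.2 ∪ insert q.1 ((bigT L).image (· + q.1))

lemma II_congr (H : ℝ → A) (n : ℕ) (S S' : Finset ℕ) (t : ℝ)
    (h : ∀ x, 0 < x → x < n → (x ∈ S ↔ x ∈ S')) : II H n S t = II H n S' t := by
  have hreg : reg n S t = reg n S' t := by
    ext v
    constructor
    · rintro ⟨hc, hcons⟩
      exact ⟨hc, fun i hi hiS => hcons i hi (fun hmem => hiS ((h (i+1) (by omega) hi).1 hmem))⟩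
    · rintro ⟨hc, hcons⟩
      exact ⟨hc, fun i hi hiS => hcons i hi (fun hmem => hiS ((h (i+1) (by omega) hi).2 hmem))⟩
  rw [II, II, hreg]

lemma II_zero (H : ℝ → A) (S : Finset ℕ) (t : ℝ) : II H 0 S t = 1 := by
  have hreg : reg 0 S t = Set.univ := by
    ext v
    simp only [reg, Set.mem_setOf_eq, Set.mem_univ, iff_true]
    exact ⟨fun i => i.elim0, fun i hi => by omega⟩
  have hFn : Fn H 0 = fun _ => (1 : A) := by
    funext v
    simp [Fn]
  have hvol : (volume : Measure (Fin 0 → ℝ)) Set.univ = 1 := by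
    rw [show (Set.univ : Set (Fin 0 → ℝ)) = Set.pi Set.univ (fun _ => Set.univ) by simp]
    rw [MeasureTheory.volume_pi, Measure.pi_pi]
    simp
  rw [II, hreg, hFn, Measure.restrict_univ, integral_const]
  simp [Measure.real, hvol]

lemma prod_II (H : ℝ → A) (hH : Continuous H) (t : ℝ) :
    ∀ (L : List (ℕ × Finset ℕ)), (∀ q ∈ L, ∀ x ∈ q.2, x ≤ q.1) →
      (L.map (fun q => II H q.1 q.2 t)).prod = II H ((L.map Prod.fst).sum) (bigT L) t := by
  intro L
  induction L with
  | nil =>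
    intro _
    simp only [List.map_nil, List.prod_nil, List.sum_nil]
    exact (II_zero H _ t).symm
  | cons q L ih =>
    intro hq
    simp only [List.map_cons, List.prod_cons, List.sum_cons]
    rw [ih (fun r hr => hq r (List.mem_cons_of_mem q hr))]
    rw [II_mul H hH q.1 ((L.map Prod.fst).sum) q.2 (bigT L) t
      (hq q List.mem_cons_self)]
    rfl

lemma mem_bigT (L : List (ℕ × Finset ℕ)) : ∀ x : ℕ,
    x ∈ bigT L ↔
      (∃ j, ∃ _ : j < L.length, x = ((L.take (j+1)).map Prod.fst).sum) ∨
      (∃ j, ∃ hj : j < L.length, ∃ s ∈ (L.get ⟨j, hj⟩).2,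
        x = s + ((L.take j).map Prod.fst).sum) := by
  induction L with
  | nil => intro x; simp [bigT]
  | cons q L ih =>
    intro x
    simp only [bigT, Finset.mem_union, Finset.mem_insert, Finset.mem_image]
    constructor
    · rintro (hq | rfl | ⟨y, hy, rfl⟩)
      · exact Or.inr ⟨0, by simp, x, hq, by simp⟩
      · exact Or.inl ⟨0, by simp, by simp⟩
      · rcases (ih y).1 hy with ⟨j, hj, rfl⟩ | ⟨j, hj, s, hs, rfl⟩
        · refine Or.inl ⟨j + 1, by simpa using Nat.succ_lt_succ hj, ?_⟩
          simp only [List.take_succ_cons, List.map_cons, List.sum_cons]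
          omega
        · refine Or.inr ⟨j + 1, by simpa using Nat.succ_lt_succ hj, s, by simpa using hs, ?_⟩
          simp only [List.take_succ_cons, List.map_cons, List.sum_cons]
          omega
    · rintro (⟨j, hj, rfl⟩ | ⟨j, hj, s, hs, rfl⟩)
      · cases j with
        | zero =>
          refine Or.inr (Or.inl ?_)
          simp
        | succ j' =>
          have hj' : j' < L.length := by simpa using hj
          refine Or.inr (Or.inr ⟨((L.take (j'+1)).map Prod.fst).sum,
            (ih _).2 (Or.inl ⟨j', hj', rfl⟩), ?_⟩)
          simp only [List.take_succ_cons, List.map_cons, List.sum_cons]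
          omega
      · cases j with
        | zero =>
          left
          simpa using hs
        | succ j' =>
          have hj' : j' < L.length := by simpa using hj
          refine Or.inr (Or.inr ⟨s + ((L.take j').map Prod.fst).sum,
            (ih _).2 (Or.inr ⟨j', hj', s, by simpa using hs, rfl⟩), ?_⟩)
          simp only [List.take_succ_cons, List.map_cons, List.sum_cons]
          omega


/-- for a composition `(n₁,…,n_k)` of `n` and subsets
`S_j ⊆ {1,…,n_j−1}`,
`H_{D_{S₁}^{(n₁)}}(t) ⋯ H_{D_{S_k}^{(n_k)}}(t) = H_{D_T^{(n)}}(t)` where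
`T = S₁ ∪ {n₁} ∪ (S₂+n₁) ∪ {n₁+n₂} ∪ ⋯ ∪ {n₁+⋯+n_{k−1}} ∪ (S_k + n₁+⋯+n_{k−1})`. -/
theorem HD_prod_eq (H : ℝ → A) (hH : Continuous H) (t : ℝ) (ht : 0 ≤ t)
    (n : ℕ) (hn : 1 ≤ n) (c : Composition n)
    (S : Fin c.length → Finset ℕ)
    (hS : ∀ i, S i ⊆ Finset.Icc 1 (c.blocksFun i - 1)) :
    (List.ofFn (fun i : Fin c.length =>
        ∑ σ ∈ Finset.univ.filter
            (fun σ : Equiv.Perm (Fin (c.blocksFun i)) => descSet σ ⊆ S i),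
          Hperm H σ t)).prod =
      ∑ ρ ∈ Finset.univ.filter
          (fun ρ : Equiv.Perm (Fin n) =>
            descSet ρ ⊆
              (Finset.Ico 1 c.length).image c.sizeUpTo ∪
                Finset.univ.biUnion
                  (fun i : Fin c.length => (S i).image (· + c.sizeUpTo i))),
        Hperm H ρ t := by
  set L : List (ℕ × Finset ℕ) := List.ofFn (fun i : Fin c.length => (c.blocksFun i, S i))
    with hL
  have hlen : L.length = c.length := by rw [hL]; exact List.length_ofFn
  have hfac : (List.ofFn fun i : Fin c.length =>
      ∑ σ ∈ Finset.univ.filter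
        (fun σ : Equiv.Perm (Fin (c.blocksFun i)) => descSet σ ⊆ S i), Hperm H σ t)
      = L.map (fun q => II H q.1 q.2 t) := by
    rw [hL, List.map_ofFn]
    exact congrArg List.ofFn (funext fun i => sumHperm_II H hH _ _ t)
  have hsum : (L.map Prod.fst).sum = n := by
    rw [hL, List.map_ofFn]
    have h0 : (Prod.fst ∘ fun i : Fin c.length => (c.blocksFun i, S i)) = c.blocksFun := rfl
    rw [h0, Composition.ofFn_blocksFun, c.blocks_sum]
  have hcond : ∀ q ∈ L, ∀ x ∈ q.2, x ≤ q.1 := by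
    intro q hq x hx
    rw [hL, List.mem_ofFn] at hq
    obtain ⟨i, rfl⟩ := hq
    have := hS i hx
    simp only [Finset.mem_Icc] at this
    show x ≤ c.blocksFun i
    omega
  have htake : ∀ j, ((L.take j).map Prod.fst).sum = c.sizeUpTo j := by
    intro j
    have h0 : (Prod.fst ∘ fun i : Fin c.length => (c.blocksFun i, S i)) = c.blocksFun := rfl
    rw [hL, List.map_take, List.map_ofFn, h0, Composition.ofFn_blocksFun]
    rfl
  have hget : ∀ (j : ℕ) (hj : j < L.length),
      (L.get ⟨j, hj⟩) = (c.blocksFun ⟨j, hlen ▸ hj⟩, S ⟨j, hlen ▸ hj⟩) := by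
    intro j hj
    simp [hL]
  rw [hfac, prod_II H hH t L hcond, hsum, sumHperm_II H hH n _ t]
  apply II_congr
  intro x hx0 hxn
  rw [mem_bigT]
  constructor
  · rintro (⟨j, hj, hxeq⟩ | ⟨j, hj, s, hs, hxeq⟩)
    · have hxx : x = c.sizeUpTo (j + 1) := by rw [hxeq, htake]
      by_cases hjl : j + 1 < c.length
      · refine Finset.mem_union_left _ (Finset.mem_image.2 ⟨j + 1, ?_, hxx.symm⟩)
        exact Finset.mem_Ico.2 ⟨by omega, hjl⟩
      · exfalso
        have hj' : j < c.length := hlen ▸ hj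
        have : j + 1 = c.length := by omega
        rw [hxx, this, c.sizeUpTo_length] at hxn
        omega
    · have hj' : j < c.length := hlen ▸ hj
      rw [hget j hj] at hs
      refine Finset.mem_union_right _ (Finset.mem_biUnion.2 ⟨⟨j, hj'⟩, Finset.mem_univ _, ?_⟩)
      refine Finset.mem_image.2 ⟨s, hs, ?_⟩
      rw [hxeq, htake]
  · intro hxT
    rcases Finset.mem_union.1 hxT with hb | hblk
    · obtain ⟨j, hjIco, hxeq⟩ := Finset.mem_image.1 hb
      obtain ⟨hj1, hjlen⟩ := Finset.mem_Ico.1 hjIco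
      refine Or.inl ⟨j - 1, by omega, ?_⟩
      rw [htake, ← hxeq]
      congr 1
      omega
    · obtain ⟨i, -, hmem⟩ := Finset.mem_biUnion.1 hblk
      obtain ⟨s, hs, hxeq⟩ := Finset.mem_image.1 hmem
      have hi' : (i : ℕ) < L.length := by rw [hlen]; exact i.2
      refine Or.inr ⟨i, hi', s, ?_, ?_⟩
      · rw [hget _ hi']
        simpa using hs
      · rw [htake, ← hxeq]
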